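/- If n ≥ 1 and 3n < m ≤ 4n, then ψ_n(m) ≤ √(m + 2√(m−2)). Moreover, writing m = 4k + s with 1 ≤ s ≤ 3, one has ψ_n(m) ≤ √(m + 2√(3(m−1)/4)) if m ≡ 1 (mod 4), ψ_n(m) ≤ √(m + 2√(3(m−3)/4)) if m ≡ 3 (mod 4), and ψ_n(m) ≤ √(m + 2√(m−2)) if m ≡ 2 (mod 4). -/

import Mathlib

open Matrix BigOperators

/-- The (unordered) singular values of a complex matrix `A`: square roots of the
eigenvalues of `Aᴴ * A`. -/
noncomputable def singVals {m n : ℕ} (A : Matrix (Fin m) (Fin n) ℂ) : Fin n → ℝ :=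
  fun i => Real.sqrt ((Matrix.isHermitian_conjTranspose_mul_self A).eigenvalues i)

/-- The trace norm: sum of the singular values. -/
noncomputable def traceNorm {m n : ℕ} (A : Matrix (Fin m) (Fin n) ℂ) : ℝ :=
  ∑ i, singVals A i

/-- The Frobenius norm. -/
noncomputable def frobNorm {m n : ℕ} (A : Matrix (Fin m) (Fin n) ℂ) : ℝ :=
  Real.sqrt (∑ i, ∑ j, ‖A i j‖ ^ 2)

/-- `sigma A k` is the `k`-th largest singular value of `A` (1-indexed), `0` if out of range. -/
noncomputable def sigma {m n : ℕ} (A : Matrix (Fin m) (Fin n) ℂ) (k : ℕ) : ℝ :=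
  if h : 1 ≤ k ∧ k ≤ n then
    singVals A (Tuple.sort (singVals A) ⟨n - k, by omega⟩)
  else 0

/-- Number of entries of `A` equal to `1`. -/
noncomputable def onesCount {a b : ℕ} (A : Matrix (Fin a) (Fin b) ℂ) : ℕ := by
  classical
  exact Finset.card (Finset.univ.filter fun p : Fin a × Fin b => A p.1 p.2 = 1)

/-- Minimum trace norm of an `n × n` (0,1)-matrix with exactly `m` ones. -/
noncomputable def psi (n m : ℕ) : ℝ :=
  sInf {x | ∃ A : Matrix (Fin n) (Fin n) ℂ, (∀ i j, A i j = 0 ∨ A i j = 1) ∧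
    onesCount A = m ∧ traceNorm A = x}


-- generic counting lemma
lemma card_filter_val_lt (n c : ℕ) (h : c ≤ n) :
    (Finset.univ.filter fun j : Fin n => (j : ℕ) < c).card = c := by
  rw [← Finset.card_range c]
  apply Finset.card_bij (fun (j : Fin n) _ => (j : ℕ))
  · intro a ha; simp at ha ⊢; exact ha
  · intro a _ b _ hab; exact Fin.val_injective hab
  · intro b hb; simp at hb
    exact ⟨⟨b, lt_of_lt_of_le hb h⟩, by simp [hb], rfl⟩

-- sum of indicator
lemma sum_ite_count {n : ℕ} (p : Fin n → Prop) [DecidablePred p] (x : ℕ) :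
    ∑ j : Fin n, (if p j then x else 0) = (Finset.univ.filter p).card * x := by
  simp [Finset.sum_ite, Finset.sum_const, mul_comm]

/-- The block matrix: rows `< s` have ones in columns `< k+1`, rows `s ≤ i < 4` have
ones in columns `< k`. -/
def bmat (n s k : ℕ) : Matrix (Fin n) (Fin n) ℂ :=
  Matrix.of fun i j =>
    if (i : ℕ) < 4 ∧ ((j : ℕ) < k ∨ ((j : ℕ) = k ∧ (i : ℕ) < s)) then 1 else 0

lemma bmat_zero_one (n s k : ℕ) : ∀ i j, bmat n s k i j = 0 ∨ bmat n s k i j = 1 := by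
  intro i j
  unfold bmat
  simp only [of_apply]
  split <;> simp

lemma bmat_onesCount (n s k : ℕ) (hs1 : 1 ≤ s) (hs4 : s ≤ 4) (hn : 4 ≤ n) (hk : k + 1 ≤ n) :
    onesCount (bmat n s k) = 4 * k + s := by
  classical
  unfold onesCount
  have hcond : ∀ p : Fin n × Fin n, bmat n s k p.1 p.2 = 1 ↔
      ((p.1 : ℕ) < 4 ∧ ((p.2 : ℕ) < k ∨ ((p.2 : ℕ) = k ∧ (p.1 : ℕ) < s))) := by
    intro p
    unfold bmat
    simp only [of_apply]
    split <;> simp_all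
  rw [Finset.filter_congr (fun p _ => by rw [hcond p])]
  rw [Finset.card_filter]
  rw [Fintype.sum_prod_type]
  have hrow : ∀ i : Fin n,
      (∑ j : Fin n, if (i : ℕ) < 4 ∧ ((j : ℕ) < k ∨ ((j : ℕ) = k ∧ (i : ℕ) < s)) then 1 else 0)
      = (if (i : ℕ) < 4 then k else 0) + (if (i : ℕ) < s then 1 else 0) := by
    intro i
    by_cases hi4 : (i : ℕ) < 4
    · by_cases his : (i : ℕ) < s
      · have : ∀ j : Fin n, ((i : ℕ) < 4 ∧ ((j : ℕ) < k ∨ ((j : ℕ) = k ∧ (i : ℕ) < s)))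
            ↔ (j : ℕ) < k + 1 := by intro j; constructor <;> (intro h; omega)
        simp only [this]
        rw [sum_ite_count, card_filter_val_lt n (k+1) hk]
        simp [hi4, his]
      · have : ∀ j : Fin n, ((i : ℕ) < 4 ∧ ((j : ℕ) < k ∨ ((j : ℕ) = k ∧ (i : ℕ) < s)))
            ↔ (j : ℕ) < k := by intro j; constructor <;> (intro h; omega)
        simp only [this]
        rw [sum_ite_count, card_filter_val_lt n k (by omega)]
        simp [hi4, his]
    · have his : ¬ (i:ℕ) < s := by omega
      simp [hi4, his]
  rw [Finset.sum_congr rfl (fun i _ => hrow i), Finset.sum_add_distrib]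
  rw [sum_ite_count, sum_ite_count, card_filter_val_lt n 4 hn,
    card_filter_val_lt n s (by omega)]
  ring

def pmat (n s : ℕ) : Matrix (Fin n) (Fin 2) ℂ :=
  Matrix.of fun i t => if (t = 0 ∧ (i : ℕ) < s) ∨ (t = 1 ∧ s ≤ (i : ℕ) ∧ (i : ℕ) < 4) then 1 else 0

def qmat (n k : ℕ) : Matrix (Fin 2) (Fin n) ℂ :=
  Matrix.of fun t j => if (t = 0 ∧ (j : ℕ) < k + 1) ∨ (t = 1 ∧ (j : ℕ) < k) then 1 else 0

lemma bmat_eq_mul (n s k : ℕ) (hs4 : s ≤ 4) : bmat n s k = pmat n s * qmat n k := by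
  ext i j
  rw [mul_apply, Fin.sum_univ_two]
  have h5 : ((j : ℕ) < k + 1) ↔ ((j : ℕ) < k ∨ (j : ℕ) = k) := by omega
  have h6 : (s ≤ (i : ℕ)) ↔ ¬ ((i : ℕ) < s) := by omega
  by_cases h1 : (i : ℕ) < s <;> by_cases h2 : (i : ℕ) < 4 <;>
    by_cases h3 : (j : ℕ) < k <;> by_cases h4 : (j : ℕ) = k <;>
    simp [bmat, pmat, qmat, h1, h2, h3, h4, h5, h6] <;> omega

lemma bmat_rank_le (n s k : ℕ) (hs4 : s ≤ 4) : (bmat n s k).rank ≤ 2 := by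
  rw [bmat_eq_mul n s k hs4]
  refine le_trans (Matrix.rank_mul_le_left _ _) ?_
  refine le_trans (Matrix.rank_le_card_width _) ?_
  simp

lemma trace_conj {n : ℕ} (U D : Matrix (Fin n) (Fin n) ℂ) (h1 : star U * U = 1) :
    (U * D * star U).trace = D.trace := by
  rw [trace_mul_cycle, h1, one_mul]

lemma trace_conj_sq {n : ℕ} (U D : Matrix (Fin n) (Fin n) ℂ) (h1 : star U * U = 1) :
    (U * D * star U * (U * D * star U)).trace = (D * D).trace := by
  have key : U * D * star U * (U * D * star U) = U * (D * D) * star U := by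
    calc U * D * star U * (U * D * star U)
        = U * (D * ((star U * U) * (D * star U))) := by simp only [mul_assoc]
      _ = U * (D * D) * star U := by rw [h1, one_mul]; simp only [mul_assoc]
  rw [key, trace_conj _ _ h1]

lemma trace_hermitian {n : ℕ} (B : Matrix (Fin n) (Fin n) ℂ) (hB : B.IsHermitian) :
    B.trace = ∑ i, (hB.eigenvalues i : ℂ) := by
  conv_lhs => rw [hB.spectral_theorem]
  rw [Unitary.conjStarAlgAut_apply]
  rw [_root_.trace_conj _ _ (Unitary.coe_star_mul_self _), trace_diagonal]
  simp

lemma trace_sq_hermitian {n : ℕ} (B : Matrix (Fin n) (Fin n) ℂ) (hB : B.IsHermitian) :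
    (B * B).trace = ∑ i, (hB.eigenvalues i : ℂ) ^ 2 := by
  conv_lhs => rw [hB.spectral_theorem]
  rw [Unitary.conjStarAlgAut_apply]
  rw [trace_conj_sq _ _ (Unitary.coe_star_mul_self _), diagonal_mul_diagonal, trace_diagonal]
  simp [pow_two]

lemma bmat_double_sum (n s k : ℕ) (hs4 : s ≤ 4) (hn : 4 ≤ n) (hk : k + 1 ≤ n) :
    (∑ i : Fin n, ∑ j : Fin n,
      if (i : ℕ) < 4 ∧ ((j : ℕ) < k ∨ ((j : ℕ) = k ∧ (i : ℕ) < s)) then 1 else 0) = 4 * k + s := by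
  have hrow : ∀ i : Fin n,
      (∑ j : Fin n, if (i : ℕ) < 4 ∧ ((j : ℕ) < k ∨ ((j : ℕ) = k ∧ (i : ℕ) < s)) then 1 else 0)
      = (if (i : ℕ) < 4 then k else 0) + (if (i : ℕ) < s then 1 else 0) := by
    intro i
    by_cases hi4 : (i : ℕ) < 4
    · by_cases his : (i : ℕ) < s
      · have h : ∀ j : Fin n, ((i : ℕ) < 4 ∧ ((j : ℕ) < k ∨ ((j : ℕ) = k ∧ (i : ℕ) < s)))
            ↔ (j : ℕ) < k + 1 := by intro j; constructor <;> (intro h; omega)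
        simp only [h]
        rw [sum_ite_count, card_filter_val_lt n (k+1) hk]
        simp [hi4, his]
      · have h : ∀ j : Fin n, ((i : ℕ) < 4 ∧ ((j : ℕ) < k ∨ ((j : ℕ) = k ∧ (i : ℕ) < s)))
            ↔ (j : ℕ) < k := by intro j; constructor <;> (intro h; omega)
        simp only [h]
        rw [sum_ite_count, card_filter_val_lt n k (by omega)]
        simp [hi4, his]
    · have his : ¬ (i : ℕ) < s := by omega
      simp [hi4, his]
  rw [Finset.sum_congr rfl (fun i _ => hrow i), Finset.sum_add_distrib]
  rw [sum_ite_count, sum_ite_count, card_filter_val_lt n 4 hn,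
    card_filter_val_lt n s (by omega)]
  ring

lemma bmat_trace (n s k : ℕ) (hs4 : s ≤ 4) (hn : 4 ≤ n) (hk : k + 1 ≤ n) :
    ((bmat n s k)ᴴ * bmat n s k).trace = ((4 * k + s : ℕ) : ℂ) := by
  have hA : ∀ i j, star (bmat n s k i j) * bmat n s k i j = bmat n s k i j := by
    intro i j
    rcases bmat_zero_one n s k i j with h | h <;> rw [h] <;> simp
  have step1 : ((bmat n s k)ᴴ * bmat n s k).trace = ∑ j : Fin n, ∑ i : Fin n, bmat n s k i j := by
    rw [Matrix.trace]
    refine Finset.sum_congr rfl fun j _ => ?_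
    rw [Matrix.diag_apply, mul_apply]
    exact Finset.sum_congr rfl fun i _ => by rw [conjTranspose_apply, hA]
  rw [step1, Finset.sum_comm]
  rw [← bmat_double_sum n s k hs4 hn hk]
  push_cast
  refine Finset.sum_congr rfl fun i _ => Finset.sum_congr rfl fun j _ => ?_
  unfold bmat
  simp only [of_apply]

lemma bmat_mulconj_apply (n s k : ℕ) (hs4 : s ≤ 4) (hk : k + 1 ≤ n) (i i' : Fin n) :
    (bmat n s k * (bmat n s k)ᴴ) i i' =
      ((if (i : ℕ) < 4 ∧ (i' : ℕ) < 4 then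
          k + (if (i : ℕ) < s ∧ (i' : ℕ) < s then 1 else 0) else 0 : ℕ) : ℂ) := by
  classical
  rw [mul_apply]
  have hterm : ∀ j : Fin n, bmat n s k i j * (bmat n s k)ᴴ j i' =
      if (((i : ℕ) < 4 ∧ ((j : ℕ) < k ∨ ((j : ℕ) = k ∧ (i : ℕ) < s))) ∧
          ((i' : ℕ) < 4 ∧ ((j : ℕ) < k ∨ ((j : ℕ) = k ∧ (i' : ℕ) < s)))) then (1 : ℂ) else 0 := by
    intro j
    rw [conjTranspose_apply]
    unfold bmat
    simp only [of_apply]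
    split_ifs with h1 h2 h3 <;> simp_all
  rw [Finset.sum_congr rfl fun j _ => hterm j, Finset.sum_boole]
  by_cases hi4 : (i : ℕ) < 4
  · by_cases hi'4 : (i' : ℕ) < 4
    · by_cases hss : (i : ℕ) < s ∧ (i' : ℕ) < s
      · have h : ∀ j : Fin n, ((((i : ℕ) < 4 ∧ ((j : ℕ) < k ∨ ((j : ℕ) = k ∧ (i : ℕ) < s))) ∧
            ((i' : ℕ) < 4 ∧ ((j : ℕ) < k ∨ ((j : ℕ) = k ∧ (i' : ℕ) < s))))) ↔ (j : ℕ) < k + 1 := by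
          intro j; constructor <;> (intro h; omega)
        rw [Finset.filter_congr fun j _ => by rw [h j], card_filter_val_lt n (k+1) hk]
        simp [hi4, hi'4, hss]
      · have h : ∀ j : Fin n, ((((i : ℕ) < 4 ∧ ((j : ℕ) < k ∨ ((j : ℕ) = k ∧ (i : ℕ) < s))) ∧
            ((i' : ℕ) < 4 ∧ ((j : ℕ) < k ∨ ((j : ℕ) = k ∧ (i' : ℕ) < s))))) ↔ (j : ℕ) < k := by
          intro j; constructor <;> (intro h; omega)
        rw [Finset.filter_congr fun j _ => by rw [h j], card_filter_val_lt n k (by omega)]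
        simp [hi4, hi'4, hss]
    · rw [Finset.filter_false_of_mem (fun j _ => by intro hcon; exact hi'4 hcon.2.1)]
      simp [hi'4]
  · rw [Finset.filter_false_of_mem (fun j _ => by intro hcon; exact hi4 hcon.1.1)]
    simp [hi4]

lemma double_ite_sum {n : ℕ} (P Q : Fin n → Prop) [DecidablePred P] [DecidablePred Q] (c : ℕ) :
    (∑ i : Fin n, ∑ i' : Fin n, if P i ∧ Q i' then c else 0)
      = (Finset.univ.filter P).card * ((Finset.univ.filter Q).card * c) := by
  have h : ∀ i i' : Fin n, (if P i ∧ Q i' then c else 0)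
      = (if P i then 1 else 0) * (if Q i' then c else 0) := by
    intro i i'
    by_cases hP : P i <;> by_cases hQ : Q i' <;> simp [hP, hQ]
  simp only [h]
  rw [← Finset.sum_mul_sum]
  rw [sum_ite_count P 1, sum_ite_count Q c, mul_one]

lemma bmat_nat_double (n s k : ℕ) (hs4 : s ≤ 4) (hn : 4 ≤ n) (hk : k + 1 ≤ n) :
    (∑ i : Fin n, ∑ i' : Fin n,
      ((if (i : ℕ) < 4 ∧ (i' : ℕ) < 4 then k + (if (i : ℕ) < s ∧ (i' : ℕ) < s then 1 else 0) else 0) *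
       (if (i' : ℕ) < 4 ∧ (i : ℕ) < 4 then k + (if (i' : ℕ) < s ∧ (i : ℕ) < s then 1 else 0) else 0)))
      = 16 * (k * k) + (s * s) * (2 * k + 1) := by
  have hpt : ∀ i i' : Fin n,
      ((if (i : ℕ) < 4 ∧ (i' : ℕ) < 4 then k + (if (i : ℕ) < s ∧ (i' : ℕ) < s then 1 else 0) else 0) *
       (if (i' : ℕ) < 4 ∧ (i : ℕ) < 4 then k + (if (i' : ℕ) < s ∧ (i : ℕ) < s then 1 else 0) else 0))
      = (if (i : ℕ) < 4 ∧ (i' : ℕ) < 4 then k * k else 0)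
        + (if (i : ℕ) < s ∧ (i' : ℕ) < s then 2 * k + 1 else 0) := by
    intro i i'
    by_cases h1 : (i : ℕ) < 4 <;> by_cases h2 : (i' : ℕ) < 4 <;>
      by_cases h3 : (i : ℕ) < s <;> by_cases h4 : (i' : ℕ) < s <;>
      simp [h1, h2, h3, h4] <;> first | omega | ring1
  simp only [hpt]
  simp only [Finset.sum_add_distrib]
  rw [double_ite_sum, double_ite_sum, card_filter_val_lt n 4 hn,
    card_filter_val_lt n s (by omega)]
  ring

lemma bmat_trace_sq (n s k : ℕ) (hs4 : s ≤ 4) (hn : 4 ≤ n) (hk : k + 1 ≤ n) :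
    (((bmat n s k)ᴴ * bmat n s k) * ((bmat n s k)ᴴ * bmat n s k)).trace
      = ((16 * (k * k) + (s * s) * (2 * k + 1) : ℕ) : ℂ) := by
  classical
  have hcyc : (((bmat n s k)ᴴ * bmat n s k) * ((bmat n s k)ᴴ * bmat n s k)).trace
      = ((bmat n s k * (bmat n s k)ᴴ) * (bmat n s k * (bmat n s k)ᴴ)).trace := by
    calc (((bmat n s k)ᴴ * bmat n s k) * ((bmat n s k)ᴴ * bmat n s k)).trace
        = ((bmat n s k)ᴴ * (bmat n s k * ((bmat n s k)ᴴ * bmat n s k))).trace := by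
          simp only [mul_assoc]
      _ = ((bmat n s k * ((bmat n s k)ᴴ * bmat n s k)) * (bmat n s k)ᴴ).trace :=
          trace_mul_comm _ _
      _ = ((bmat n s k * (bmat n s k)ᴴ) * (bmat n s k * (bmat n s k)ᴴ)).trace := by
          simp only [mul_assoc]
  rw [hcyc]
  have htr : ((bmat n s k * (bmat n s k)ᴴ) * (bmat n s k * (bmat n s k)ᴴ)).trace
      = ∑ i : Fin n, ∑ i' : Fin n,
          (bmat n s k * (bmat n s k)ᴴ) i i' * (bmat n s k * (bmat n s k)ᴴ) i' i := by
    rw [Matrix.trace]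
    exact Finset.sum_congr rfl fun i _ => by rw [Matrix.diag_apply, mul_apply]
  rw [htr]
  simp only [bmat_mulconj_apply n s k hs4 hk]
  rw [← bmat_nat_double n s k hs4 hn hk]
  push_cast
  rfl

lemma sum_sqrt_eq {n : ℕ} (e : Fin n → ℝ) (M c : ℝ) (hc : 0 ≤ c)
    (he : ∀ i, 0 ≤ e i)
    (hsupp : (Finset.univ.filter fun i => e i ≠ 0).card ≤ 2)
    (h1 : ∑ i, e i = M) (h2 : ∑ i, (e i) ^ 2 = M ^ 2 - 2 * c) :
    ∑ i, Real.sqrt (e i) = Real.sqrt (M + 2 * Real.sqrt c) := by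
  classical
  set F := Finset.univ.filter fun i => e i ≠ 0 with hF
  have hmem : ∀ i : Fin n, i ∉ F → e i = 0 := by
    intro i hi
    by_contra h
    exact hi (Finset.mem_filter.mpr ⟨Finset.mem_univ i, h⟩)
  have hrestrict : ∀ f : Fin n → ℝ, (∀ i, e i = 0 → f i = 0) → ∑ i, f i = ∑ i ∈ F, f i := by
    intro f hf
    exact (Finset.sum_subset (Finset.subset_univ F) fun i _ hi => hf i (hmem i hi)).symm
  have hS : ∑ i ∈ F, e i = M := by rw [← hrestrict e fun i h => h]; exact h1
  have hQ : ∑ i ∈ F, (e i) ^ 2 = M ^ 2 - 2 * c := by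
    rw [← hrestrict (fun i => (e i) ^ 2) fun i h => by simp [h]]; exact h2
  have hgoal : ∑ i, Real.sqrt (e i) = ∑ i ∈ F, Real.sqrt (e i) :=
    hrestrict (fun i => Real.sqrt (e i)) fun i h => by simp [h]
  rw [hgoal]
  have h012 : F.card = 0 ∨ F.card = 1 ∨ F.card = 2 := by omega
  rcases h012 with h | h | h
  · rw [Finset.card_eq_zero] at h
    rw [h] at hS hQ ⊢
    simp only [Finset.sum_empty] at hS hQ ⊢
    have hM : M = 0 := hS.symm
    have hc0 : c = 0 := by nlinarith
    rw [hM, hc0]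
    simp
  · obtain ⟨a, ha⟩ := Finset.card_eq_one.mp h
    rw [ha] at hS hQ ⊢
    simp only [Finset.sum_singleton] at hS hQ ⊢
    rw [hS] at hQ
    have hc0 : c = 0 := by linarith
    rw [hc0, hS]
    simp
  · obtain ⟨a, b, hab, hab2⟩ := Finset.card_eq_two.mp h
    rw [hab2] at hS hQ ⊢
    rw [Finset.sum_pair hab] at hS hQ ⊢
    have h3 : (e a + e b) ^ 2 = M ^ 2 := by rw [hS]
    have hprod : e a * e b = c := by nlinarith [h3]
    have hsq : (Real.sqrt (e a) + Real.sqrt (e b)) ^ 2 = M + 2 * Real.sqrt c := by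
      rw [add_sq, Real.sq_sqrt (he a), Real.sq_sqrt (he b), ← hprod,
        Real.sqrt_mul (he a)]
      linarith [hS]
    have hnn : 0 ≤ Real.sqrt (e a) + Real.sqrt (e b) := by positivity
    rw [← hsq, Real.sqrt_sq hnn]

open scoped ComplexOrder in
lemma bmat_traceNorm (n s k : ℕ) (hs4 : s ≤ 4) (hn : 4 ≤ n) (hk : k + 1 ≤ n) :
    traceNorm (bmat n s k)
      = Real.sqrt (((4 * k + s : ℕ) : ℝ) + 2 * Real.sqrt ((s * (4 - s) * k : ℕ) : ℝ)) := by
  classical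
  set A := bmat n s k with hAdef
  have hB := Matrix.isHermitian_conjTranspose_mul_self A
  set e := hB.eigenvalues with hedef
  have he : ∀ i, 0 ≤ e i := fun i =>
    (Matrix.posSemidef_conjTranspose_mul_self A).eigenvalues_nonneg i
  have p1 : ∑ i, e i = ((4 * k + s : ℕ) : ℝ) := by
    have h := (trace_hermitian _ hB).symm.trans (bmat_trace n s k hs4 hn hk)
    have h' : ((∑ i, e i : ℝ) : ℂ) = (((4 * k + s : ℕ) : ℝ) : ℂ) := by
      push_cast at h ⊢
      exact h
    exact_mod_cast h'
  have p2 : ∑ i, (e i) ^ 2 = ((4 * k + s : ℕ) : ℝ) ^ 2 - 2 * ((s * (4 - s) * k : ℕ) : ℝ) := by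
    have h := (trace_sq_hermitian _ hB).symm.trans (bmat_trace_sq n s k hs4 hn hk)
    have h' : ((∑ i, (e i) ^ 2 : ℝ) : ℂ) = ((16 * (k * k) + (s * s) * (2 * k + 1) : ℕ) : ℂ) := by
      push_cast at h ⊢
      exact h
    have h'' : ∑ i, (e i) ^ 2 = ((16 * (k * k) + (s * s) * (2 * k + 1) : ℕ) : ℝ) := by
      exact_mod_cast h'
    rw [h'']
    have hsub : ((4 - s : ℕ) : ℝ) = 4 - (s : ℝ) := by
      rw [Nat.cast_sub hs4]
      norm_num
    push_cast [hsub]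
    ring
  have p3 : (Finset.univ.filter fun i => e i ≠ 0).card ≤ 2 := by
    have hr : (Aᴴ * A).rank = Fintype.card {i // e i ≠ 0} := hB.rank_eq_card_non_zero_eigs
    rw [Matrix.rank_conjTranspose_mul_self] at hr
    have := bmat_rank_le n s k hs4
    rw [← hAdef] at this
    rw [hr] at this
    rwa [Fintype.card_subtype] at this
  have hcnn : (0 : ℝ) ≤ ((s * (4 - s) * k : ℕ) : ℝ) := Nat.cast_nonneg _
  exact sum_sqrt_eq e _ _ hcnn he p3 p1 p2

lemma traceNorm_nonneg' {a b : ℕ} (A : Matrix (Fin a) (Fin b) ℂ) : 0 ≤ traceNorm A :=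
  Finset.sum_nonneg fun i _ => Real.sqrt_nonneg _

lemma psi_le_bmat (n s k : ℕ) (hs1 : 1 ≤ s) (hs4 : s ≤ 4) (hn : 4 ≤ n) (hk : k + 1 ≤ n) :
    psi n (4 * k + s)
      ≤ Real.sqrt (((4 * k + s : ℕ) : ℝ) + 2 * Real.sqrt ((s * (4 - s) * k : ℕ) : ℝ)) := by
  have hmem : traceNorm (bmat n s k) ∈ {x | ∃ A : Matrix (Fin n) (Fin n) ℂ,
      (∀ i j, A i j = 0 ∨ A i j = 1) ∧ onesCount A = 4 * k + s ∧ traceNorm A = x} :=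
    ⟨bmat n s k, bmat_zero_one n s k, bmat_onesCount n s k hs1 hs4 hn hk, rfl⟩
  have hbdd : BddBelow {x | ∃ A : Matrix (Fin n) (Fin n) ℂ,
      (∀ i j, A i j = 0 ∨ A i j = 1) ∧ onesCount A = 4 * k + s ∧ traceNorm A = x} := by
    refine ⟨0, fun x hx => ?_⟩
    obtain ⟨A, _, _, hA⟩ := hx
    rw [← hA]
    exact traceNorm_nonneg' A
  have h := csInf_le hbdd hmem
  rw [bmat_traceNorm n s k hs4 hn hk] at h
  exact h

theorem stmt18 (n m : ℕ) (hn : 1 ≤ n) (h1 : 3 * n < m) (h2 : m ≤ 4 * n) :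
    psi n m ≤ Real.sqrt ((m : ℝ) + 2 * Real.sqrt ((m : ℝ) - 2)) ∧
    (m % 4 = 1 → psi n m ≤ Real.sqrt ((m : ℝ) + 2 * Real.sqrt (3 * ((m : ℝ) - 1) / 4))) ∧
    (m % 4 = 3 → psi n m ≤ Real.sqrt ((m : ℝ) + 2 * Real.sqrt (3 * ((m : ℝ) - 3) / 4))) ∧
    (m % 4 = 2 → psi n m ≤ Real.sqrt ((m : ℝ) + 2 * Real.sqrt ((m : ℝ) - 2))) := by
  by_cases hn4 : n ≤ 3
  · -- the set is empty, psi = 0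
    have hempty : {x | ∃ A : Matrix (Fin n) (Fin n) ℂ, (∀ i j, A i j = 0 ∨ A i j = 1) ∧
        onesCount A = m ∧ traceNorm A = x} = ∅ := by
      ext x
      simp only [Set.mem_setOf_eq, Set.mem_empty_iff_false, iff_false]
      rintro ⟨A, _, hcnt, _⟩
      have hle : onesCount A ≤ n * n := by
        unfold onesCount
        refine le_trans (Finset.card_filter_le _ _) ?_
        simp [Finset.card_univ]
      interval_cases n <;> omega
    have hzero : psi n m = 0 := by
      unfold psi
      rw [hempty, Real.sInf_empty]
    rw [hzero]
    exact ⟨Real.sqrt_nonneg _, fun _ => Real.sqrt_nonneg _, fun _ => Real.sqrt_nonneg _,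
      fun _ => Real.sqrt_nonneg _⟩
  · push_neg at hn4
    have hn' : 4 ≤ n := hn4
    obtain ⟨k, s, hs1, hs4, hm⟩ : ∃ k s, 1 ≤ s ∧ s ≤ 4 ∧ m = 4 * k + s :=
      ⟨(m - 1) / 4, (m - 1) % 4 + 1, by omega, by omega, by omega⟩
    have hm13 : 13 ≤ m := by omega
    have hk3 : 3 ≤ k := by omega
    have hk : k + 1 ≤ n := by omega
    have key := psi_le_bmat n s k hs1 hs4 hn' hk
    rw [← hm] at key
    have hmR : (m : ℝ) = 4 * (k : ℝ) + (s : ℝ) := by exact_mod_cast congrArg (Nat.cast : ℕ → ℝ) hm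
    constructor
    · -- general bound
      have hnat : s * (4 - s) * k ≤ m - 2 := by interval_cases s <;> omega
      have hcast : ((s * (4 - s) * k : ℕ) : ℝ) ≤ (m : ℝ) - 2 := by
        have h2m : (2 : ℕ) ≤ m := by omega
        calc ((s * (4 - s) * k : ℕ) : ℝ) ≤ ((m - 2 : ℕ) : ℝ) := by exact_mod_cast hnat
          _ = (m : ℝ) - 2 := by rw [Nat.cast_sub h2m]; norm_num
      refine key.trans (Real.sqrt_le_sqrt ?_)
      have := Real.sqrt_le_sqrt hcast
      linarith
    refine ⟨?_, ?_, ?_⟩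
    · intro hmod
      have hs : s = 1 := by omega
      subst hs
      have harg : ((1 * (4 - 1) * k : ℕ) : ℝ) = 3 * ((m : ℝ) - 1) / 4 := by
        push_cast
        rw [hmR]
        push_cast
        ring
      rw [harg] at key
      exact key
    · intro hmod
      have hs : s = 3 := by omega
      subst hs
      have harg : ((3 * (4 - 3) * k : ℕ) : ℝ) = 3 * ((m : ℝ) - 3) / 4 := by
        push_cast
        rw [hmR]
        push_cast
        ring
      rw [harg] at key
      exact key
    · intro hmod
      have hs : s = 2 := by omega
      subst hs
      have harg : ((2 * (4 - 2) * k : ℕ) : ℝ) = (m : ℝ) - 2 := by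
        push_cast
        rw [hmR]
        push_cast
        ring
      rw [harg] at key
      exact key
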